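/- For every p > 1 and every x ∈ (0,1), the following two-sided bound holds: (1 + (1−x^p)/(p(1+p)))·(1−x^p)^(1/p) < arccos_p(x) < (π_p/2)·(1−x^p)^(1/p). -/

import Mathlib

open Real

/-- The generalized inverse sine: `arcsin_p x = ∫₀ˣ (1 - tᵖ)^(-1/p) dt`. -/
noncomputable def arcsinp (p x : ℝ) : ℝ := ∫ t in (0:ℝ)..x, (1 - t ^ p) ^ (-1 / p)

/-- The generalized inverse cosine: `arccos_p x = arcsin_p ((1 - xᵖ)^(1/p))`. -/
noncomputable def arccosp (p x : ℝ) : ℝ := arcsinp p ((1 - x ^ p) ^ (1 / p))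

/-- The generalized π: `π_p = 2π / (p sin(π/p))`. -/
noncomputable def pip (p : ℝ) : ℝ := 2 * π / (p * Real.sin (π / p))

section Aux
open Set MeasureTheory intervalIntegral

-- pointwise lower bound
lemma aux_pointwise {p u : ℝ} (hp : 1 < p) (hu0 : 0 < u) (hu1 : u < 1) :
    1 + u / p < (1 - u) ^ (-1 / p) := by
  have hp0 : (0:ℝ) < p := by linarith
  have h1u : (0:ℝ) < 1 - u := by linarith
  have hA : (0:ℝ) < 1 + u / p := by positivity
  have e1 : (1 + u / p) ^ p ≤ Real.exp u := by
    calc (1 + u / p) ^ p ≤ (Real.exp (u / p)) ^ p :=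
          Real.rpow_le_rpow hA.le (by linarith [Real.add_one_le_exp (u / p)]) hp0.le
      _ = Real.exp u := by rw [← Real.exp_mul, div_mul_cancel₀ _ hp0.ne']
  have e2 : Real.exp u < (1 - u)⁻¹ := by
    have h := Real.add_one_lt_exp (x := -u) (by simpa using hu0.ne')
    rw [Real.exp_neg] at h
    have h' : (1 - u) * Real.exp u < 1 := by
      have h2 := mul_lt_mul_of_pos_right h (Real.exp_pos u)
      rw [inv_mul_cancel₀ (Real.exp_pos u).ne'] at h2
      nlinarith
    rw [inv_eq_one_div, lt_div_iff₀ h1u]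
    nlinarith
  have key : (1 + u / p) ^ p < (1 - u)⁻¹ := lt_of_le_of_lt e1 e2
  have h2 := Real.rpow_lt_rpow (by positivity) key (by positivity : (0:ℝ) < 1 / p)
  rw [← Real.rpow_mul hA.le, mul_one_div, div_self hp0.ne', Real.rpow_one] at h2
  have h3 : ((1 - u)⁻¹) ^ (1 / p) = (1 - u) ^ (-1 / p) := by
    rw [← Real.rpow_neg_one (1 - u), ← Real.rpow_mul h1u.le, neg_one_mul, neg_div, one_div]
  rwa [h3] at h2

-- strict monotonicity of the integrand
lemma aux_mono {p a b : ℝ} (hp : 1 < p) (ha : 0 ≤ a) (hab : a < b) (hb : b < 1) :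
    (1 - a ^ p) ^ (-1 / p) < (1 - b ^ p) ^ (-1 / p) := by
  have hp0 : (0:ℝ) < p := by linarith
  have h1 : a ^ p < b ^ p := Real.rpow_lt_rpow ha hab hp0
  have h2 : b ^ p < 1 := Real.rpow_lt_one (by linarith) hb hp0
  exact Real.rpow_lt_rpow_of_neg (by linarith) (by linarith)
    (div_neg_of_neg_of_pos (by norm_num) hp0)

lemma cont_pow {p : ℝ} (hp : 0 < p) : Continuous fun t : ℝ => t ^ p :=
  Real.continuous_rpow_const hp.le

-- continuity of the integrand away from 1
lemma cont_f {p b : ℝ} (hp : 1 < p) (hb : b < 1) :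
    ContinuousOn (fun t : ℝ => (1 - t ^ p) ^ (-1 / p)) (Icc 0 b) := by
  have hp0 : (0:ℝ) < p := by linarith
  apply ContinuousOn.rpow_const ((continuous_const.sub (cont_pow hp0)).continuousOn)
  intro t ht
  rcases le_or_gt b 0 with h | h
  · left
    have : t = 0 := le_antisymm (ht.2.trans h) ht.1
    simp [this, Real.zero_rpow hp0.ne']
  · left
    have : t ^ p ≤ b ^ p := Real.rpow_le_rpow ht.1 ht.2 hp0.le
    have : b ^ p < 1 := Real.rpow_lt_one h.le hb hp0
    intro hcon
    change 1 - t ^ p = 0 at hcon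
    nlinarith

-- integrability of (1-t)^(-1/p) on [0,1]
lemma intb {p : ℝ} (hp : 1 < p) :
    IntervalIntegrable (fun t : ℝ => (1 - t) ^ (-1 / p)) volume 0 1 := by
  have h : (-1 : ℝ) < -1 / p := by
    rw [neg_div]
    have : 1 / p < 1 := by rw [div_lt_one (by linarith)]; exact hp
    linarith [this]
  have h1 := intervalIntegral.intervalIntegrable_rpow' (a := 0) (b := 1) h
  have h2 := h1.comp_sub_left 1
  simpa using h2.symm

lemma aemeas_f {p : ℝ} (hp : 1 < p) :
    AEStronglyMeasurable (fun t : ℝ => (1 - t ^ p) ^ (-1 / p))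
      (volume.restrict (Set.Ioc (0:ℝ) 1)) := by
  rw [← Measure.restrict_congr_set Ioo_ae_eq_Ioc]
  refine ContinuousOn.aestronglyMeasurable ?_ measurableSet_Ioo
  apply ContinuousOn.rpow_const ((continuous_const.sub (cont_pow (by linarith))).continuousOn)
  intro t ht
  left
  have : t ^ p < 1 := Real.rpow_lt_one ht.1.le ht.2 (by linarith)
  intro hcon
  change 1 - t ^ p = 0 at hcon
  nlinarith

-- integrability of the main integrand on [0,1]
lemma int_f {p : ℝ} (hp : 1 < p) :
    IntervalIntegrable (fun t : ℝ => (1 - t ^ p) ^ (-1 / p)) volume 0 1 := by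
  have hp0 : (0:ℝ) < p := by linarith
  have hmeas := aemeas_f hp
  rw [show Set.Ioc (0:ℝ) 1 = Set.uIoc (0:ℝ) 1 by rw [Set.uIoc_of_le]; norm_num] at hmeas
  apply (intb hp).mono_fun hmeas
  rw [Set.uIoc_of_le (by norm_num : (0:ℝ) ≤ 1)]
  filter_upwards [ae_restrict_mem measurableSet_Ioc] with t ht
  rcases eq_or_lt_of_le ht.2 with h1 | h1
  · simp [h1, Real.one_rpow, Real.zero_rpow hp0.ne']
  · have h0 : 0 < t := ht.1
    have htp : t ^ p ≤ t := by
      calc t ^ p ≤ t ^ (1:ℝ) := Real.rpow_le_rpow_of_exponent_ge h0 h1.le hp.le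
        _ = t := Real.rpow_one t
    have h2 : (1 - t ^ p) ^ (-1/p) ≤ (1 - t) ^ (-1/p) :=
      Real.rpow_le_rpow_of_nonpos (by linarith) (by linarith)
        (le_of_lt (div_neg_of_neg_of_pos (by norm_num) hp0))
    have h3 : 0 ≤ (1 - t ^ p) ^ (-1/p) := Real.rpow_nonneg (by linarith) _
    simp only [Real.norm_eq_abs]
    rw [abs_of_nonneg h3, abs_of_nonneg (Real.rpow_nonneg (by linarith) _)]
    exact h2

-- the real beta integral value
lemma beta_val {q : ℝ} (h0 : 0 < q) (h1 : q < 1) :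
    ∫ x in (0:ℝ)..1, x ^ (q - 1) * (1 - x) ^ (-q) = π / Real.sin (π * q) := by
  have hB : Complex.betaIntegral q (1 - q) = ↑π / Complex.sin (↑π * ↑q) := by
    have h2 := Complex.Gamma_mul_Gamma_eq_betaIntegral (s := (q:ℂ)) (t := ((1 - q : ℝ):ℂ))
      (by simpa using h0) (by simpa using sub_pos.mpr h1)
    have h3 := Complex.Gamma_mul_Gamma_one_sub (q:ℂ)
    rw [show ((1 - q : ℝ):ℂ) = 1 - (q:ℂ) by push_cast; ring] at h2
    rw [h3] at h2
    rw [show (q:ℂ) + (1 - (q:ℂ)) = 1 by ring, Complex.Gamma_one, one_mul] at h2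
    exact h2.symm
  have hre : Complex.betaIntegral q (1 - q) =
      ((∫ x in (0:ℝ)..1, x ^ (q - 1) * (1 - x) ^ (-q) : ℝ) : ℂ) := by
    rw [Complex.betaIntegral, ← intervalIntegral.integral_ofReal]
    apply intervalIntegral.integral_congr
    intro x hx
    rw [Set.uIcc_of_le (by norm_num : (0:ℝ) ≤ 1)] at hx
    simp only [Complex.ofReal_mul]
    rw [Complex.ofReal_cpow hx.1, Complex.ofReal_cpow (by linarith [hx.2] : (0:ℝ) ≤ 1 - x)]
    push_cast
    ring_nf
  rw [hre] at hB
  have : ((π / Real.sin (π * q) : ℝ) : ℂ) = ↑π / Complex.sin (↑π * ↑q) := by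
    push_cast [Complex.ofReal_sin]
    norm_num
  rw [← this] at hB
  exact_mod_cast hB

-- integrability of the beta integrand
lemma beta_integrable {q : ℝ} (h0 : 0 < q) (h1 : q < 1) :
    IntervalIntegrable (fun x : ℝ => x ^ (q - 1) * (1 - x) ^ (-q)) volume 0 1 := by
  have hleft : IntervalIntegrable (fun x : ℝ => x ^ (q - 1) * (1 - x) ^ (-q))
      volume 0 (1/2) := by
    apply IntervalIntegrable.mul_continuousOn
      (intervalIntegral.intervalIntegrable_rpow' (by linarith))
    apply ContinuousOn.rpow_const ((continuous_const.sub continuous_id).continuousOn)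
    intro x hx
    rw [Set.uIcc_of_le (by norm_num : (0:ℝ) ≤ 1/2)] at hx
    left
    have := hx.2
    intro hcon
    norm_num at hcon
    linarith
  have haux : IntervalIntegrable (fun x : ℝ => x ^ (-q) * (1 - x) ^ (q - 1))
      volume 0 (1/2) := by
    apply IntervalIntegrable.mul_continuousOn
      (intervalIntegral.intervalIntegrable_rpow' (by linarith))
    apply ContinuousOn.rpow_const ((continuous_const.sub continuous_id).continuousOn)
    intro x hx
    rw [Set.uIcc_of_le (by norm_num : (0:ℝ) ≤ 1/2)] at hx
    left
    have := hx.2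
    intro hcon
    norm_num at hcon
    linarith
  have hright : IntervalIntegrable (fun x : ℝ => x ^ (q - 1) * (1 - x) ^ (-q))
      volume (1/2) 1 := by
    have h2 := (haux.comp_sub_left 1).symm
    norm_num at h2
    simpa [mul_comm] using h2
  exact hleft.trans hright

lemma subst_eq {p q : ℝ} (hp : 1 < p) (hq : q = 1/p) {x : ℝ} (hx : 0 < x) :
    (p * x ^ (p-1)) • (p⁻¹ * ((x^p) ^ (q - 1) * (1 - x^p) ^ (-q)))
      = (1 - x^p) ^ (-1/p) := by
  have hp0 : (0:ℝ) < p := by linarith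
  have hpq : p * q = 1 := by rw [hq, mul_one_div_cancel hp0.ne']
  have h1 : (x^p) ^ (q - 1) = x ^ (1 - p) := by
    rw [← Real.rpow_mul hx.le]
    congr 1
    rw [mul_sub, hpq, mul_one]
  have h2 : x ^ (p-1) * x ^ (1-p) = 1 := by
    rw [← Real.rpow_add hx]
    norm_num
  have h3 : (-q : ℝ) = -1/p := by rw [hq]; ring
  rw [smul_eq_mul, h1, h3]
  calc p * x ^ (p-1) * (p⁻¹ * (x ^ (1-p) * (1 - x^p) ^ (-1/p)))
      = (p * p⁻¹) * (x ^ (p-1) * x ^ (1-p)) * (1 - x^p) ^ (-1/p) := by ring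
    _ = (1 - x^p) ^ (-1/p) := by rw [h2, mul_inv_cancel₀ hp0.ne']; ring

lemma int_f_val {p : ℝ} (hp : 1 < p) :
    ∫ t in (0:ℝ)..1, (1 - t ^ p) ^ (-1 / p) = π / (p * Real.sin (π / p)) := by
  have hp0 : (0:ℝ) < p := by linarith
  set q : ℝ := 1/p with hq
  have hq0 : 0 < q := by positivity
  have hq1 : q < 1 := by rw [hq, div_lt_one hp0]; exact hp
  set g : ℝ → ℝ := fun u => p⁻¹ * (u ^ (q - 1) * (1 - u) ^ (-q)) with hg
  set φ : ℝ → ℝ := fun t => t ^ p with hφ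
  have himg1 : φ '' (Set.Ioo (min 0 1) (max 0 1)) ⊆ Set.Ioo 0 1 := by
    rintro - ⟨t, ht, rfl⟩
    rw [min_eq_left (by norm_num : (0:ℝ) ≤ 1), max_eq_right (by norm_num : (0:ℝ) ≤ 1)] at ht
    exact ⟨Real.rpow_pos_of_pos ht.1 p, Real.rpow_lt_one ht.1.le ht.2 hp0⟩
  have himg2 : φ '' (Set.uIcc 0 1) ⊆ Set.Icc 0 1 := by
    rintro - ⟨t, ht, rfl⟩
    rw [Set.uIcc_of_le (by norm_num : (0:ℝ) ≤ 1)] at ht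
    exact ⟨Real.rpow_nonneg ht.1 p, Real.rpow_le_one ht.1 ht.2 hp0.le⟩
  have hgint : IntegrableOn g (Set.Icc 0 1) := by
    have := (beta_integrable hq0 hq1).const_mul p⁻¹
    exact (intervalIntegrable_iff_integrableOn_Icc_of_le (by norm_num)).mp this
  have hcongr : ∀ x : ℝ, 0 < x →
      (fun x => (p * x ^ (p-1)) • (g ∘ φ) x) x = (1 - x^p) ^ (-1/p) := by
    intro x hx
    exact subst_eq hp hq hx
  have key := intervalIntegral.integral_comp_smul_deriv''' (a := 0) (b := 1)
    (f := φ) (f' := fun t => p * t ^ (p-1)) (g := g)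
    ((cont_pow hp0).continuousOn)
    (fun x _ => (Real.hasDerivAt_rpow_const (p := p) (Or.inr hp.le)).hasDerivWithinAt)
    ?_ ?_ ?_
  · have hφ0 : φ 0 = 0 := by simp [hφ, Real.zero_rpow hp0.ne']
    have hφ1 : φ 1 = 1 := by simp [hφ, Real.one_rpow]
    rw [hφ0, hφ1] at key
    have lhs_eq : (∫ x in (0:ℝ)..1, (p * x ^ (p-1)) • (g ∘ φ) x)
        = ∫ t in (0:ℝ)..1, (1 - t ^ p) ^ (-1 / p) := by
      apply intervalIntegral.integral_congr_ae
      apply Filter.Eventually.of_forall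
      intro x hx
      rw [Set.uIoc_of_le (by norm_num : (0:ℝ) ≤ 1)] at hx
      exact hcongr x hx.1
    rw [lhs_eq] at key
    rw [key, hg]
    simp only []
    rw [intervalIntegral.integral_const_mul, beta_val hq0 hq1]
    rw [hq]
    rw [mul_one_div π p]
    have hs : 0 < Real.sin (π / p) :=
      Real.sin_pos_of_pos_of_lt_pi (by positivity) (div_lt_self Real.pi_pos hp)
    field_simp
  · refine ContinuousOn.mono ?_ himg1
    apply ContinuousOn.mul continuous_const.continuousOn
    apply ContinuousOn.mul
    · exact (continuous_id.continuousOn).rpow_const fun x hx => Or.inl hx.1.ne'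
    · refine ((continuous_const.sub continuous_id).continuousOn).rpow_const fun x hx => Or.inl ?_
      have := hx.2
      simp only [Set.mem_Ioo] at hx
      intro hcon
      change 1 - x = 0 at hcon
      nlinarith [hx.2]
  · exact hgint.mono_set himg2
  · -- integrability of LHS
    have hfint : IntegrableOn (fun t : ℝ => (1 - t ^ p) ^ (-1 / p)) (Set.Icc 0 1) :=
      (intervalIntegrable_iff_integrableOn_Icc_of_le (by norm_num)).mp (int_f hp)
    rw [Set.uIcc_of_le (by norm_num : (0:ℝ) ≤ 1)]
    apply hfint.congr
    have hae : ∀ᵐ x ∂(volume.restrict (Set.Icc (0:ℝ) 1)), x ≠ 0 := by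
      apply ae_restrict_of_ae
      rw [ae_iff]
      convert Real.volume_singleton (a := 0) using 2
      ext x; simp
    filter_upwards [hae, ae_restrict_mem measurableSet_Icc] with x hx0 hxmem
    exact (hcongr x (lt_of_le_of_ne hxmem.1 (Ne.symm hx0))).symm



lemma key_bounds {p y : ℝ} (hp : 1 < p) (hy0 : 0 < y) (hy1 : y < 1) :
    (1 + y ^ p / (p * (1 + p))) * y < arcsinp p y ∧
      arcsinp p y < pip p / 2 * y := by
  have hp0 : (0:ℝ) < p := by linarith
  set f : ℝ → ℝ := fun t => (1 - t ^ p) ^ (-1 / p) with hf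
  constructor
  · -- lower bound
    have hlow : (∫ t in (0:ℝ)..y, (1 + t ^ p / p)) < ∫ t in (0:ℝ)..y, f t := by
      apply intervalIntegral.integral_lt_integral_of_continuousOn_of_le_of_exists_lt hy0
      · exact (continuous_const.add ((cont_pow hp0).div_const p)).continuousOn
      · exact cont_f hp hy1
      · intro t ht
        have htp0 : 0 < t ^ p := Real.rpow_pos_of_pos ht.1 p
        have htp1 : t ^ p < 1 := Real.rpow_lt_one ht.1.le (lt_of_le_of_lt ht.2 hy1) hp0
        exact (aux_pointwise hp htp0 htp1).le
      · refine ⟨y, Set.right_mem_Icc.mpr hy0.le, ?_⟩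
        have htp0 : 0 < y ^ p := Real.rpow_pos_of_pos hy0 p
        have htp1 : y ^ p < 1 := Real.rpow_lt_one hy0.le hy1 hp0
        exact aux_pointwise hp htp0 htp1
    have hcalc : (∫ t in (0:ℝ)..y, (1 + t ^ p / p)) = (1 + y ^ p / (p * (1 + p))) * y := by
      rw [intervalIntegral.integral_add intervalIntegrable_const
        ((intervalIntegral.intervalIntegrable_rpow' (by linarith : (-1:ℝ) < p)).div_const p),
        intervalIntegral.integral_div,
        integral_rpow (Or.inl (by linarith : (-1:ℝ) < p))]
      rw [Real.zero_rpow (by positivity : p + 1 ≠ 0), Real.rpow_add_one hy0.ne' p]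
      simp only [intervalIntegral.integral_const, smul_eq_mul, sub_zero, mul_one]
      field_simp
      ring
    rw [arcsinp, ← hcalc]
    exact hlow
  · -- upper bound
    have hval : pip p / 2 = ∫ t in (0:ℝ)..1, f t := by
      rw [hf, int_f_val hp, pip]; ring
    have hconty : ContinuousOn (fun x : ℝ => f (x * y)) (Set.Icc 0 1) := by
      apply (cont_f hp hy1).comp ((continuous_id.mul continuous_const).continuousOn)
      intro x hx
      refine ⟨mul_nonneg hx.1 hy0.le, ?_⟩
      change x * y ≤ y
      nlinarith [hx.1, hx.2]
    have i1 : IntervalIntegrable (fun x : ℝ => f (x * y)) volume 0 1 := by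
      rw [show Set.Icc (0:ℝ) 1 = Set.uIcc (0:ℝ) 1 by rw [Set.uIcc_of_le]; norm_num] at hconty
      exact hconty.intervalIntegrable
    have i2 : IntervalIntegrable f volume 0 1 := int_f hp
    have hsub12 : Set.uIcc (0:ℝ) (1/2) ⊆ Set.uIcc (0:ℝ) 1 := by
      apply Set.uIcc_subset_uIcc <;> simp [Set.mem_uIcc] <;> norm_num
    have hsub21 : Set.uIcc (1/2:ℝ) 1 ⊆ Set.uIcc (0:ℝ) 1 := by
      apply Set.uIcc_subset_uIcc <;> simp [Set.mem_uIcc] <;> norm_num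
    have hA : (∫ x in (0:ℝ)..(1/2), f (x * y)) < ∫ x in (0:ℝ)..(1/2), f x := by
      apply intervalIntegral.integral_lt_integral_of_continuousOn_of_le_of_exists_lt
        (by norm_num)
      · exact hconty.mono (Set.Icc_subset_Icc le_rfl (by norm_num))
      · exact cont_f hp (by norm_num)
      · intro x hx
        exact (aux_mono hp (mul_nonneg hx.1.le hy0.le)
          (by nlinarith [hx.1]) (by linarith [hx.2])).le
      · exact ⟨1/2, Set.right_mem_Icc.mpr (by norm_num),
          aux_mono hp (by positivity) (by nlinarith) (by norm_num)⟩
    have hB : (∫ x in (1/2:ℝ)..1, f (x * y)) ≤ ∫ x in (1/2:ℝ)..1, f x := by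
      apply intervalIntegral.integral_mono_ae_restrict (by norm_num : (1/2:ℝ) ≤ 1)
        (i1.mono_set hsub21) (i2.mono_set hsub21)
      have hae : ∀ᵐ x ∂(volume.restrict (Set.Icc (1/2:ℝ) 1)), x ≠ 1 := by
        apply ae_restrict_of_ae
        rw [ae_iff]
        convert Real.volume_singleton (a := 1) using 2
        ext x; simp
      filter_upwards [hae, ae_restrict_mem measurableSet_Icc] with x hx1 hxmem
      exact (aux_mono hp (by nlinarith [hxmem.1])
        (by nlinarith [hxmem.1]) (lt_of_le_of_ne hxmem.2 hx1)).le
    have hsplit1 : (∫ x in (0:ℝ)..(1/2), f (x * y)) + ∫ x in (1/2:ℝ)..1, f (x * y)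
        = ∫ x in (0:ℝ)..1, f (x * y) :=
      intervalIntegral.integral_add_adjacent_intervals (i1.mono_set hsub12) (i1.mono_set hsub21)
    have hsplit2 : (∫ x in (0:ℝ)..(1/2), f x) + ∫ x in (1/2:ℝ)..1, f x
        = ∫ x in (0:ℝ)..1, f x :=
      intervalIntegral.integral_add_adjacent_intervals (i2.mono_set hsub12) (i2.mono_set hsub21)
    have hlt : (∫ x in (0:ℝ)..1, f (x * y)) < ∫ x in (0:ℝ)..1, f x := by
      rw [← hsplit1, ← hsplit2]; linarith
    have hscale : y * ∫ x in (0:ℝ)..1, f (x * y) = ∫ t in (0:ℝ)..y, f t := by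
      have := intervalIntegral.smul_integral_comp_mul_right (a := 0) (b := 1) f y
      simp only [zero_mul, one_mul, smul_eq_mul] at this
      exact this
    rw [arcsinp, ← hf, ← hscale, hval]
    calc y * ∫ x in (0:ℝ)..1, f (x * y) < y * ∫ x in (0:ℝ)..1, f x :=
          mul_lt_mul_of_pos_left hlt hy0
      _ = (∫ t in (0:ℝ)..1, f t) * y := by ring

theorem arccosp_bounds (p x : ℝ) (hp : 1 < p) (hx : x ∈ Set.Ioo (0:ℝ) 1) :
    (1 + (1 - x ^ p) / (p * (1 + p))) * (1 - x ^ p) ^ (1 / p) < arccosp p x ∧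
      arccosp p x < pip p / 2 * (1 - x ^ p) ^ (1 / p) := by
  have hp0 : (0:ℝ) < p := by linarith
  obtain ⟨hx0, hx1⟩ := hx
  have hxp0 : 0 < x ^ p := Real.rpow_pos_of_pos hx0 p
  have hxp1 : x ^ p < 1 := Real.rpow_lt_one hx0.le hx1 hp0
  set y : ℝ := (1 - x ^ p) ^ (1 / p) with hy
  have hy0 : 0 < y := Real.rpow_pos_of_pos (by linarith) _
  have hy1 : y < 1 := Real.rpow_lt_one (by linarith) (by linarith) (by positivity)
  have hyp : y ^ p = 1 - x ^ p := by
    rw [hy, ← Real.rpow_mul (by linarith : (0:ℝ) ≤ 1 - x ^ p),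
      one_div_mul_cancel hp0.ne', Real.rpow_one]
  have h := key_bounds hp hy0 hy1
  rw [arccosp, ← hy, ← hyp]
  exact h

end Aux
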